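/- Soundness of pattern-based library learning: if a term t compresses into a compressed term t̂ via a sequence of κ-rewrite steps (each replacing a subterm matching a pattern p by the application (λ vars(p) → p) applied to the matched arguments), then t̂ beta-evaluates back to t. -/

import Mathlib

/-! STATEMENT 9: Soundness of pattern-based library learning: if a term t
compresses into a compressed term t̂ via a sequence of κ-rewrite steps, then
t̂ beta-evaluates back to t. -/

/-- Compressed terms: variables, constructor applications, and fully-applied
lambda abstractions `(λ x₁ … xₙ → body) a₁ … aₙ`. -/
inductive Tm (S V : Type) : Type where
  | var : V → Tm S V
  | con : S → List (Tm S V) → Tm S V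
  | app : List V → Tm S V → List (Tm S V) → Tm S V

/-- (First-order) patterns: terms over constructors that may contain
variables, but no lambda abstractions or applications. -/
inductive Pat (S V : Type) : Type where
  | var : V → Pat S V
  | con : S → List (Pat S V) → Pat S V

namespace Tm

variable {S V : Type} [DecidableEq V]

/-- Parallel substitution of terms for free variables; binders shadow. -/
def subst (σ : V → Option (Tm S V)) : Tm S V → Tm S V
  | .var x => (σ x).getD (.var x)
  | .con s args => .con s (args.attach.map (fun a => subst σ a.1))
  | .app xs b args =>
      .app xs (subst (fun v => if v ∈ xs then none else σ v) b)
        (args.attach.map (fun a => subst σ a.1))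
  decreasing_by
  all_goals simp_wf
  all_goals (try have h := List.sizeOf_lt_of_mem a.2)
  all_goals omega

def mkEnv (xs : List V) (args : List (Tm S V)) : V → Option (Tm S V) :=
  fun v => (xs.zip args).lookup v

/-- One step of beta-reduction, applied in any context. -/
inductive Step : Tm S V → Tm S V → Prop where
  | beta (xs : List V) (b : Tm S V) (args : List (Tm S V)) :
      xs.length = args.length →
      Step (.app xs b args) (subst (mkEnv xs args) b)
  | conArg (s : S) (l r : List (Tm S V)) (a a' : Tm S V) :
      Step a a' → Step (.con s (l ++ a :: r)) (.con s (l ++ a' :: r))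
  | appBody (xs : List V) (b b' : Tm S V) (args : List (Tm S V)) :
      Step b b' → Step (.app xs b args) (.app xs b' args)
  | appArg (xs : List V) (b : Tm S V) (l r : List (Tm S V)) (a a' : Tm S V) :
      Step a a' → Step (.app xs b (l ++ a :: r)) (.app xs b (l ++ a' :: r))

/-- Ground terms of the base language: no variables and no applications. -/
inductive IsGround : Tm S V → Prop where
  | con (s : S) (args : List (Tm S V)) :
      (∀ a ∈ args, IsGround a) → IsGround (.con s args)

end Tm

namespace Pat

variable {S V : Type} [DecidableEq V]

/-- The list of variable occurrences of a pattern. -/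
def varsList : Pat S V → List V
  | .var x => [x]
  | .con _ args => args.attach.flatMap (fun a => varsList a.1)
  decreasing_by
  all_goals simp_wf
  all_goals (try have h := List.sizeOf_lt_of_mem a.2)
  all_goals omega

/-- The distinct variables of a pattern (in order of first occurrence). -/
def pvars (p : Pat S V) : List V := p.varsList.dedup

/-- A pattern viewed as a (compressed) term. -/
def toTm : Pat S V → Tm S V
  | .var x => .var x
  | .con s args => .con s (args.attach.map (fun a => toTm a.1))
  decreasing_by
  all_goals simp_wf
  all_goals (try have h := List.sizeOf_lt_of_mem a.2)
  all_goals omega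

/-- Applying a substitution of terms for pattern variables, yielding a term. -/
def substTm (σ : V → Tm S V) : Pat S V → Tm S V
  | .var x => σ x
  | .con s args => .con s (args.attach.map (fun a => substTm σ a.1))
  decreasing_by
  all_goals simp_wf
  all_goals (try have h := List.sizeOf_lt_of_mem a.2)
  all_goals omega

end Pat

namespace Tm

variable {S V : Type} [DecidableEq V]

/-- One κ-rewrite step using patterns from `P`: somewhere in the term, a
subterm `σ(p)` matching a pattern `p ∈ P` is replaced by the beta-redex
`(λ vars(p) → p) σ(vars(p))`. -/
inductive KStep (P : Set (Pat S V)) : Tm S V → Tm S V → Prop where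
  | root (p : Pat S V) (σ : V → Tm S V) :
      p ∈ P →
      KStep P (p.substTm σ) (.app p.pvars p.toTm (p.pvars.map σ))
  | conArg (s : S) (l r : List (Tm S V)) (a a' : Tm S V) :
      KStep P a a' → KStep P (.con s (l ++ a :: r)) (.con s (l ++ a' :: r))
  | appBody (xs : List V) (b b' : Tm S V) (args : List (Tm S V)) :
      KStep P b b' → KStep P (.app xs b args) (.app xs b' args)
  | appArg (xs : List V) (b : Tm S V) (l r : List (Tm S V)) (a a' : Tm S V) :
      KStep P a a' → KStep P (.app xs b (l ++ a :: r)) (.app xs b (l ++ a' :: r))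

end Tm

section Aux

variable {S V : Type} [DecidableEq V]

lemma lookup_zip_map (f : V → Tm S V) :
    ∀ (xs : List V) (v : V), v ∈ xs →
      (xs.zip (xs.map f)).lookup v = some (f v) := by
  intro xs
  induction xs with
  | nil => intro v hv; simp at hv
  | cons x xs ih =>
    intro v hv
    simp only [List.map_cons, List.zip_cons_cons, List.lookup_cons]
    by_cases h : v = x
    · subst h; simp
    · have hv' : v ∈ xs := by
        rcases List.mem_cons.mp hv with h' | h'
        · exact absurd h' h
        · exact h'
      have hb : (v == x) = false := beq_false_of_ne h
      simp only [hb]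
      exact ih v hv'

lemma subst_toTm (σ : V → Tm S V) (p : Pat S V)
    (τ : V → Option (Tm S V))
    (hτ : ∀ v ∈ p.varsList, τ v = some (σ v)) :
    Tm.subst τ p.toTm = p.substTm σ := by
  induction p using Pat.toTm.induct with
  | case1 x =>
    have hx : x ∈ (Pat.var x : Pat S V).varsList := by
      unfold Pat.varsList; simp
    simp only [Pat.toTm, Pat.substTm]
    unfold Tm.subst
    rw [hτ x hx]; rfl
  | case2 s args ih =>
    simp only [Pat.toTm, Pat.substTm]
    unfold Tm.subst
    simp only [Tm.con.injEq, true_and, List.map_subtype,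
      List.attach_map_val, List.unattach_attach]
    rw [List.map_map]
    apply List.map_congr_left
    intro a ha
    apply ih ⟨a, ha⟩
    intro v hv
    apply hτ
    unfold Pat.varsList
    simp only [List.flatMap_subtype, List.unattach_attach]
    exact List.mem_flatMap.mpr ⟨a, ha, hv⟩

lemma kstep_rev {P : Set (Pat S V)} {t t' : Tm S V}
    (h : Tm.KStep P t t') : Tm.Step t' t := by
  induction h with
  | root p σ hp =>
    have hlen : p.pvars.length = (p.pvars.map σ).length := by simp
    have hb := Tm.Step.beta p.pvars p.toTm (p.pvars.map σ) hlen
    have heq : Tm.subst (Tm.mkEnv p.pvars (p.pvars.map σ)) p.toTm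
        = p.substTm σ := by
      apply subst_toTm
      intro v hv
      have hv' : v ∈ p.pvars := List.mem_dedup.mpr hv
      unfold Tm.mkEnv
      exact lookup_zip_map σ p.pvars v hv'
    rwa [heq] at hb
  | conArg s l r a a' _ ih => exact Tm.Step.conArg s l r _ _ ih
  | appBody xs b b' args _ ih => exact Tm.Step.appBody xs _ _ args ih
  | appArg xs b l r a a' _ ih => exact Tm.Step.appArg xs b l r _ _ ih

end Aux

/-- Soundness of pattern-based library learning: if a term `t` (of the base
language) compresses into `tc` by κ-rewrite steps with patterns from `P`,
then `tc` beta-evaluates back to `t`. -/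
theorem kstep_sound {S V : Type} [DecidableEq V]
    (P : Set (Pat S V)) (t tc : Tm S V) (hg : Tm.IsGround t)
    (hcomp : Relation.ReflTransGen (Tm.KStep P) t tc) :
    Relation.ReflTransGen Tm.Step tc t := by
  induction hcomp with
  | refl => exact Relation.ReflTransGen.refl
  | tail _ hstep ih => exact Relation.ReflTransGen.head (kstep_rev hstep) ih
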